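/- arXiv:1205.6047 — 2 statements merged into one kernel-verified Lean document; each statement's English description precedes it below -/
import Mathlib

section
/- Suppose there exist: a K-GDD (V,G,B) of type g₁^{u₁}···g_N^{u_N}; for each i, a super-simple 2-(αgᵢ+1, 5, 1) directed design; and for each k ∈ K, a super-simple directed GDD with block size 5, index 1, and type α^k. Then there exists a super-simple 2-(α·Σᵢ gᵢuᵢ + 1, 5, 1) directed design. -/
/-- `(V, G, Bl)` is a `K`-GDD: the groups `G` partition `V`, blocks have sizes in `K`,
every pair of points from distinct groups lies in exactly one block and pairs within
a group lie in no block. -/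
def IsGDD (V : Type*) [DecidableEq V] (G Bl : Finset (Finset V)) (K : Set ℕ) : Prop :=
  (∀ x : V, ∃! g, g ∈ G ∧ x ∈ g) ∧
  (∀ b ∈ Bl, b.card ∈ K) ∧
  ∀ x y : V, x ≠ y →
    ((∃ g ∈ G, x ∈ g ∧ y ∈ g) → ¬ ∃ b ∈ Bl, x ∈ b ∧ y ∈ b) ∧
    ((¬ ∃ g ∈ G, x ∈ g ∧ y ∈ g) → ∃! b, b ∈ Bl ∧ x ∈ b ∧ y ∈ b)

/-- `(V, G, B)` is a `(k,1)`-DGDD: the groups `G` partition `V`, blocks are ordered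
`k`-tuples of distinct points, every ordered pair of points from distinct groups occurs
as a subsequence of exactly one block, and no ordered pair of points from a common group
occurs in any block. -/
def IsDGDD (V : Type*) [DecidableEq V] (G : Finset (Finset V)) (B : Finset (List V))
    (k : ℕ) : Prop :=
  (∀ x : V, ∃! g, g ∈ G ∧ x ∈ g) ∧
  (∀ b ∈ B, b.length = k ∧ b.Nodup) ∧
  ∀ x y : V, x ≠ y →
    ((∃ g ∈ G, x ∈ g ∧ y ∈ g) → ¬ ∃ b ∈ B, [x, y].Sublist b) ∧
    ((¬ ∃ g ∈ G, x ∈ g ∧ y ∈ g) → ∃! b, b ∈ B ∧ [x, y].Sublist b)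

/-- A collection of ordered blocks is super-simple if the underlying (unordered) blocks
are pairwise distinct and any two of them intersect in at most two points. -/
def SuperSimple {V : Type*} [DecidableEq V] (B : Finset (List V)) : Prop :=
  ∀ b ∈ B, ∀ c ∈ B, b ≠ c → (b.toFinset ∩ c.toFinset).card ≤ 2

/-- `B` is a `2`-`(v,k,1)` directed design on `V`: every ordered pair of distinct points
occurs as a subsequence of exactly one ordered `k`-tuple block. -/
def IsDD (V : Type*) [DecidableEq V] (B : Finset (List V)) (k : ℕ) : Prop :=
  (∀ b ∈ B, b.length = k ∧ b.Nodup) ∧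
  ∀ x y : V, x ≠ y → ∃! b, b ∈ B ∧ [x, y].Sublist b

/-- There exists a super-simple 2-(n,5,1) directed design. -/
def ExistsSSDD (n : ℕ) : Prop :=
  ∃ B : Finset (List (Fin n)), IsDD (Fin n) B 5 ∧ SuperSimple B

/-- There exists a super-simple (5,1)-DGDD of type α^k. -/
def ExistsSSDGDD (α k : ℕ) : Prop :=
  ∃ (G : Finset (Finset (Fin (α * k)))) (B : Finset (List (Fin (α * k)))),
    IsDGDD (Fin (α * k)) G B 5 ∧ G.card = k ∧ (∀ g ∈ G, g.card = α) ∧ SuperSimple B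

/- ### Auxiliary lemmas -/

lemma pair_sublist_of_mem {β : Type*} {l : List β} {p q : β}
    (hp : p ∈ l) (hq : q ∈ l) (hne : p ≠ q) :
    [p, q].Sublist l ∨ [q, p].Sublist l := by
  induction l with
  | nil => simp at hp
  | cons a t ih =>
    rcases List.mem_cons.mp hp with rfl | hp'
    · have hq' : q ∈ t := by
        rcases List.mem_cons.mp hq with rfl | h
        · exact absurd rfl hne
        · exact h
      exact Or.inl ((List.singleton_sublist.mpr hq').cons₂ p)
    · rcases List.mem_cons.mp hq with rfl | hq'
      · exact Or.inr ((List.singleton_sublist.mpr hp').cons₂ q)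
      · rcases ih hp' hq' with h | h
        · exact Or.inl (h.cons a)
        · exact Or.inr (h.cons a)

lemma pair_sublist_map {β γ : Type*} {f : β → γ} {m : List β} {x y : γ}
    (h : [x, y].Sublist (m.map f)) :
    ∃ p q, f p = x ∧ f q = y ∧ [p, q].Sublist m := by
  obtain ⟨l', hl', he⟩ := List.sublist_map_iff.mp h
  rcases l' with _ | ⟨p, _ | ⟨q, _ | _⟩⟩ <;> simp only [List.map_cons, List.map_nil] at he
  · exact absurd he (by simp)
  · exact absurd he (by simp)
  · simp only [List.cons.injEq, and_true] at he
    exact ⟨p, q, he.1.symm, he.2.symm, hl'⟩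
  · exact absurd he (by simp)

lemma toFinset_map' {β γ : Type*} [DecidableEq β] [DecidableEq γ] (f : β → γ) (m : List β) :
    (m.map f).toFinset = m.toFinset.image f := by
  ext x; simp

lemma ss_image {β γ : Type*} [DecidableEq β] [DecidableEq γ] {f : β → γ}
    (hf : Function.Injective f) {D : Finset (List β)}
    (hss : SuperSimple D)
    {m m' : List β} (hm : m ∈ D) (hm' : m' ∈ D) (hne : m.map f ≠ m'.map f) :
    ((m.map f).toFinset ∩ (m'.map f).toFinset).card ≤ 2 := by
  have hmm : m ≠ m' := fun hc => hne (by rw [hc])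
  rw [toFinset_map', toFinset_map', ← Finset.image_inter _ _ hf,
    Finset.card_image_of_injective _ hf]
  exact hss m hm m' hm' hmm

lemma existsSSDD_of_card {W : Type*} [DecidableEq W] [Fintype W] {n : ℕ}
    (h : Fintype.card W = n) (B : Finset (List W)) (hDD : IsDD W B 5)
    (hss : SuperSimple B) : ExistsSSDD n := by
  have e : W ≃ Fin n := Fintype.equivFinOfCardEq h
  refine ⟨B.image (List.map e), ⟨?_, ?_⟩, ?_⟩
  · intro l hl
    obtain ⟨m, hm, rfl⟩ := Finset.mem_image.mp hl
    obtain ⟨h1, h2⟩ := hDD.1 m hm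
    exact ⟨by simp [h1], h2.map e.injective⟩
  · intro x y hxy
    obtain ⟨m, ⟨hm, hsub⟩, huniq⟩ := hDD.2 (e.symm x) (e.symm y) (by
      intro hc; exact hxy (by rw [← e.apply_symm_apply x, hc, e.apply_symm_apply]))
    refine ⟨m.map e, ⟨Finset.mem_image_of_mem _ hm, by simpa using hsub.map e⟩, ?_⟩
    rintro l ⟨hl, hsubl⟩
    obtain ⟨m', hm', rfl⟩ := Finset.mem_image.mp hl
    have hsub' : [e.symm x, e.symm y].Sublist m' := by
      have := hsubl.map e.symm
      simpa using this
    rw [huniq m' ⟨hm', hsub'⟩]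
  · intro l hl l' hl' hne
    obtain ⟨m, hm, rfl⟩ := Finset.mem_image.mp hl
    obtain ⟨m', hm', rfl⟩ := Finset.mem_image.mp hl'
    exact ss_image e.injective hss hm hm' hne

/-- membership predicate for the expanded point set of a group -/
def InG {V : Type*} (α : ℕ) (g : Finset V) (w : Option (V × Fin α)) : Prop :=
  w = none ∨ ∃ x ∈ g, ∃ i : Fin α, w = some (x, i)

lemma hInG_some {V : Type*} {α : ℕ} (g : Finset V) (x : Option (V × Fin α)) (u : V)
    (i : Fin α) (hx : InG α g x) (he : x = some (u, i)) : u ∈ g := by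
  rcases hx with rfl | ⟨z, hz, k, rfl⟩
  · exact absurd he (by simp)
  · simp only [Option.some.injEq, Prod.mk.injEq] at he
    rw [← he.1]; exact hz

/-- Wilson-type construction: given a K-GDD of type g₁^{u₁}···g_N^{u_N} (point set V,
so Σ gᵢuᵢ = |V|), super-simple 2-(αgᵢ+1,5,1) directed designs for each group size gᵢ, and
super-simple (5,1)-DGDDs of type α^k for each k ∈ K, there exists a super-simple
2-(α·Σ gᵢuᵢ + 1, 5, 1) directed design. -/
theorem superSimple_DD_construction (V : Type*) [DecidableEq V] [Fintype V]
    (K : Set ℕ) (G Bl : Finset (Finset V)) (α : ℕ)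
    (hGDD : IsGDD V G Bl K)
    (hgroups : ∀ g ∈ G, ExistsSSDD (α * g.card + 1))
    (hblocks : ∀ k ∈ K, ExistsSSDGDD α k) :
    ExistsSSDD (α * Fintype.card V + 1) := by
  classical
  obtain ⟨hpart, hsizes, hpairs⟩ := hGDD
  -- the group of a point
  have hpart' : ∀ x : V, ∃ g, g ∈ G ∧ x ∈ g ∧ ∀ g', g' ∈ G → x ∈ g' → g' = g := by
    intro x
    obtain ⟨g, hg, hu⟩ := hpart x
    exact ⟨g, hg.1, hg.2, fun g' h1 h2 => hu g' ⟨h1, h2⟩⟩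
  choose grpOf hgrpG hgrpm hgrpu using hpart'
  have hdisj : ∀ g, g ∈ G → ∀ g', g' ∈ G → ∀ z : V, z ∈ g → z ∈ g' → g = g' := by
    intro g hgG g' hg' z hz hz'
    rw [hgrpu z g hgG hz]
    exact (hgrpu z g' hg' hz').symm
  have hblk_grp : ∀ c ∈ Bl, ∀ g ∈ G, ∀ z z' : V, z ∈ c → z' ∈ c → z ∈ g → z' ∈ g →
      z = z' := by
    intro c hcB g hgG z z' hzc hz'c hzg hz'g
    by_contra hne
    exact (hpairs z z' hne).1 ⟨g, hgG, hzg, hz'g⟩ ⟨c, hcB, hzc, hz'c⟩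
  have hblk_blk : ∀ c ∈ Bl, ∀ c' ∈ Bl, c ≠ c' → ∀ z z' : V, z ∈ c → z ∈ c' → z' ∈ c →
      z' ∈ c' → z = z' := by
    intro c hcB c' hc'B hbne z z' h1 h2 h3 h4
    by_contra hne
    by_cases hcase : ∃ g ∈ G, z ∈ g ∧ z' ∈ g
    · exact (hpairs z z' hne).1 hcase ⟨c, hcB, h1, h3⟩
    · obtain ⟨d, -, hdu⟩ := (hpairs z z' hne).2 hcase
      exact hbne ((hdu c ⟨hcB, h1, h3⟩).trans (hdu c' ⟨hc'B, h2, h4⟩).symm)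
  -- gadgets for groups
  have hfg : ∀ g ∈ G, ∃ (f : Fin (α * g.card + 1) → Option (V × Fin α))
      (D : Finset (List (Fin (α * g.card + 1)))),
      Function.Injective f ∧
      (∀ p, InG α g (f p)) ∧
      (∃ p, f p = none) ∧
      (∀ x ∈ g, ∀ i : Fin α, ∃ p, f p = some (x, i)) ∧
      (∀ l ∈ D, l.length = 5 ∧ l.Nodup) ∧
      (∀ p q, p ≠ q → ∃! l, l ∈ D ∧ [p, q].Sublist l) ∧
      SuperSimple D := by
    intro g hg
    obtain ⟨D, hDD, hss⟩ := hgroups g hg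
    have hcard : Fintype.card (Fin (α * g.card + 1))
        = Fintype.card (Option ({x // x ∈ g} × Fin α)) := by
      simp [Fintype.card_option, Fintype.card_coe, mul_comm]
    let e := Fintype.equivOfCardEq hcard
    have hOinj : Function.Injective
        (fun q : {x // x ∈ g} × Fin α => ((q.1.1, q.2) : V × Fin α)) := by
      rintro ⟨⟨a, ha⟩, i⟩ ⟨⟨b, hb⟩, j⟩ h
      simp only [Prod.mk.injEq] at h
      simp [Prod.ext_iff, Subtype.ext_iff, h.1, h.2]
    refine ⟨fun p => (e p).map (fun q => (q.1.1, q.2)), D, ?_, ?_, ?_, ?_, hDD.1, hDD.2, hss⟩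
    · intro p q hpq
      exact e.injective (Option.map_injective hOinj hpq)
    · intro p
      rcases h : e p with _ | ⟨⟨x, hx⟩, i⟩
      · left; simp [h]
      · right; exact ⟨x, hx, i, by simp [h]⟩
    · exact ⟨e.symm none, by simp⟩
    · intro x hx i
      exact ⟨e.symm (some (⟨x, hx⟩, i)), by simp⟩
  choose fg Dg hfg_inj hfg_range hfg_none hfg_surj hDg_shape hDg_cov hDg_ss using hfg
  -- gadgets for blocks
  have hfb : ∀ b ∈ Bl, ∃ (f : Fin (α * b.card) → Option (V × Fin α))
      (D : Finset (List (Fin (α * b.card)))),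
      Function.Injective f ∧
      (∀ p, ∃ x ∈ b, ∃ i : Fin α, f p = some (x, i)) ∧
      (∀ x ∈ b, ∀ i : Fin α, ∃ p, f p = some (x, i)) ∧
      (∀ l ∈ D, l.length = 5 ∧ l.Nodup) ∧
      (∀ p q, (∃ x i j, f p = some (x, i) ∧ f q = some (x, j)) →
        ¬ ∃ l ∈ D, [p, q].Sublist l) ∧
      (∀ p q, p ≠ q → (¬ ∃ x i j, f p = some (x, i) ∧ f q = some (x, j)) →
        ∃! l, l ∈ D ∧ [p, q].Sublist l) ∧
      SuperSimple D := by
    intro b hb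
    obtain ⟨Gb, D, ⟨hGpart, hshape, hGpairs⟩, hGcard, hGsize, hss⟩ :=
      hblocks b.card (hsizes b hb)
    have hGpart' : ∀ p, ∃ gr, gr ∈ Gb ∧ p ∈ gr ∧ ∀ g', g' ∈ Gb → p ∈ g' → g' = gr := by
      intro p
      obtain ⟨gr, hgr, hu⟩ := hGpart p
      exact ⟨gr, hgr.1, hgr.2, fun g' h1 h2 => hu g' ⟨h1, h2⟩⟩
    choose grp hgrp1 hgrp2 hgrp3 using hGpart'
    have hσc : Fintype.card {s // s ∈ Gb} = Fintype.card {z // z ∈ b} := by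
      simp [Fintype.card_coe, hGcard]
    let σ : {s // s ∈ Gb} ≃ {z // z ∈ b} := Fintype.equivOfCardEq hσc
    have key : ∀ s ∈ Gb, ∃ w : (p : Fin (α * b.card)) → p ∈ s → Fin α,
        ∀ p hp q hq, w p hp = w q hq → p = q := by
      intro s hs
      have hc : Fintype.card {p // p ∈ s} = Fintype.card (Fin α) := by
        simp [Fintype.card_coe, hGsize s hs]
      let e : {p // p ∈ s} ≃ Fin α := Fintype.equivOfCardEq hc
      refine ⟨fun p hp => e ⟨p, hp⟩, fun p hp q hq h => ?_⟩
      exact congrArg Subtype.val (e.injective h)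
    choose w hw using key
    have hwcongr : ∀ (s s' : Finset (Fin (α * b.card))) (hss' : s = s') (hs : s ∈ Gb)
        (hs' : s' ∈ Gb) (p) (hp : p ∈ s) (hp' : p ∈ s'), w s hs p hp = w s' hs' p hp' := by
      rintro s s' rfl hs hs' p hp hp'; rfl
    set f : Fin (α * b.card) → Option (V × Fin α) :=
      fun p => some ((σ ⟨grp p, hgrp1 p⟩).1, w (grp p) (hgrp1 p) p (hgrp2 p)) with hf
    have hbase1 : ∀ p q, grp p = grp q →
        (σ ⟨grp p, hgrp1 p⟩).1 = (σ ⟨grp q, hgrp1 q⟩).1 := by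
      intro p q h; exact congrArg (fun z => (σ z).1) (Subtype.ext h)
    have hbase2 : ∀ p q, (σ ⟨grp p, hgrp1 p⟩).1 = (σ ⟨grp q, hgrp1 q⟩).1 → grp p = grp q := by
      intro p q h
      exact congrArg Subtype.val (σ.injective (Subtype.ext h))
    have finj : Function.Injective f := by
      intro p q h
      simp only [hf, Option.some.injEq, Prod.mk.injEq] at h
      have hg : grp p = grp q := hbase2 p q h.1
      have h2 := h.2
      have hpm : p ∈ grp q := hg ▸ hgrp2 p
      rw [hwcongr (grp p) (grp q) hg (hgrp1 p) (hgrp1 q) p (hgrp2 p) hpm] at h2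
      exact hw (grp q) (hgrp1 q) p hpm q (hgrp2 q) h2
    have hrange : ∀ p, ∃ x ∈ b, ∃ i : Fin α, f p = some (x, i) :=
      fun p => ⟨(σ ⟨grp p, hgrp1 p⟩).1, (σ ⟨grp p, hgrp1 p⟩).2, _, rfl⟩
    have hsurj : ∀ x ∈ b, ∀ i : Fin α, ∃ p, f p = some (x, i) := by
      have hwc : ((b ×ˢ (Finset.univ : Finset (Fin α))).image
          (some : V × Fin α → Option (V × Fin α))).card = α * b.card := by
        rw [Finset.card_image_of_injective _ (Option.some_injective _), Finset.card_product]
        simp [mul_comm]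
      have himg : (Finset.univ : Finset (Fin (α * b.card))).image f ⊆
          (b ×ˢ Finset.univ).image some := by
        intro v hv
        obtain ⟨p, -, rfl⟩ := Finset.mem_image.mp hv
        obtain ⟨x, hx, i, he⟩ := hrange p
        rw [he]
        exact Finset.mem_image_of_mem some (Finset.mem_product.mpr ⟨hx, Finset.mem_univ i⟩)
      have heq : (Finset.univ : Finset (Fin (α * b.card))).image f
          = (b ×ˢ Finset.univ).image some := by
        apply Finset.eq_of_subset_of_card_le himg
        rw [Finset.card_image_of_injective _ finj, hwc]
        simp
      intro x hx i
      have hmem : some (x, i) ∈ (Finset.univ : Finset (Fin (α * b.card))).image f := by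
        rw [heq]
        exact Finset.mem_image_of_mem some (Finset.mem_product.mpr ⟨hx, Finset.mem_univ i⟩)
      obtain ⟨p, -, hp⟩ := Finset.mem_image.mp hmem
      exact ⟨p, hp⟩
    have hnocov : ∀ p q, (∃ x i j, f p = some (x, i) ∧ f q = some (x, j)) →
        ¬ ∃ l ∈ D, [p, q].Sublist l := by
      rintro p q ⟨x, i, j, h1, h2⟩ ⟨l, hl, hsub⟩
      have hbq : (σ ⟨grp p, hgrp1 p⟩).1 = (σ ⟨grp q, hgrp1 q⟩).1 := by
        simp only [hf, Option.some.injEq, Prod.mk.injEq] at h1 h2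
        rw [h1.1, h2.1]
      have hg := hbase2 p q hbq
      by_cases hpq : p = q
      · subst hpq
        have hnd : ([p, p] : List _).Nodup := (hshape l hl).2.sublist hsub
        simp at hnd
      · exact (hGpairs p q hpq).1 ⟨grp p, hgrp1 p, hgrp2 p, hg.symm ▸ hgrp2 q⟩ ⟨l, hl, hsub⟩
    have hcov : ∀ p q, p ≠ q → (¬ ∃ x i j, f p = some (x, i) ∧ f q = some (x, j)) →
        ∃! l, l ∈ D ∧ [p, q].Sublist l := by
      intro p q hpq hnb
      apply (hGpairs p q hpq).2
      rintro ⟨gr, hgr, hpg, hqg⟩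
      have h1 : gr = grp p := hgrp3 p gr hgr hpg
      have h2 : gr = grp q := hgrp3 q gr hgr hqg
      have hgg : grp p = grp q := h1 ▸ h2
      refine hnb ⟨(σ ⟨grp q, hgrp1 q⟩).1, w (grp p) (hgrp1 p) p (hgrp2 p),
        w (grp q) (hgrp1 q) q (hgrp2 q), ?_, rfl⟩
      simp only [hf]
      rw [hbase1 p q hgg]
    exact ⟨f, D, finj, hrange, hsurj, hshape, hnocov, hcov, hss⟩
  choose fb Db hfb_inj hfb_range hfb_surj hDb_shape hDb_nocov hDb_cov hDb_ss using hfb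
  -- the big block collection
  set 𝔅 : Finset (List (Option (V × Fin α))) :=
    (G.attach.biUnion fun g => (Dg g.1 g.2).image (List.map (fg g.1 g.2))) ∪
    (Bl.attach.biUnion fun c => (Db c.1 c.2).image (List.map (fb c.1 c.2))) with h𝔅
  have hmem : ∀ l, l ∈ 𝔅 ↔
      (∃ g : {s // s ∈ G}, ∃ m ∈ Dg g.1 g.2, List.map (fg g.1 g.2) m = l) ∨
      (∃ c : {s // s ∈ Bl}, ∃ m ∈ Db c.1 c.2, List.map (fb c.1 c.2) m = l) := by
    intro l
    simp [h𝔅]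
  have hInG_of_mem : ∀ (g) (hg : g ∈ G) (m) (x : Option (V × Fin α)),
      x ∈ List.map (fg g hg) m → InG α g x := by
    intro g hg m x hx
    obtain ⟨p, -, rfl⟩ := List.mem_map.mp hx
    exact hfg_range g hg p
  have hInB_of_mem : ∀ (c) (hc : c ∈ Bl) (m) (x : Option (V × Fin α)),
      x ∈ List.map (fb c hc) m → ∃ z ∈ c, ∃ i : Fin α, x = some (z, i) := by
    intro c hc m x hx
    obtain ⟨p, -, rfl⟩ := List.mem_map.mp hx
    obtain ⟨z, hz, i, he⟩ := hfb_range c hc p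
    exact ⟨z, hz, i, he⟩
  have hInG_eq : ∀ g, g ∈ G → ∀ g', g' ∈ G → ∀ x : Option (V × Fin α),
      InG α g x → InG α g' x → x ≠ none → g = g' := by
    intro g hgG g' hg' x h1 h2 hn
    rcases h1 with rfl | ⟨z, hz, i, rfl⟩
    · exact absurd rfl hn
    · rcases h2 with h | ⟨z', hz', i', he⟩
      · exact absurd h (by simp)
      · simp only [Option.some.injEq, Prod.mk.injEq] at he
        exact hdisj g hgG g' hg' z hz (by rw [he.1]; exact hz')
  have hsameb : ∀ (c) (hc : c ∈ Bl) (m), m ∈ Db c hc → ∀ p, p ∈ m → ∀ q, q ∈ m →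
      ∀ (z : V) (i j : Fin α), fb c hc p = some (z, i) → fb c hc q = some (z, j) →
      p = q := by
    intro c hc m hm p hp q hq z i j h1 h2
    by_contra hpq
    rcases pair_sublist_of_mem hp hq hpq with hsub | hsub
    · exact hDb_nocov c hc p q ⟨z, i, j, h1, h2⟩ ⟨m, hm, hsub⟩
    · exact hDb_nocov c hc q p ⟨z, j, i, h2, h1⟩ ⟨m, hm, hsub⟩
  -- pairs inside a single expanded group
  have H1 : ∀ g (hg : g ∈ G) (x y : Option (V × Fin α)), x ≠ y →
      InG α g x → InG α g y → ∃! l, l ∈ 𝔅 ∧ [x, y].Sublist l := by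
    intro g hg x y hxy hx hy
    obtain ⟨p, hp⟩ : ∃ p, fg g hg p = x := by
      rcases hx with rfl | ⟨u, hu, i, rfl⟩
      · exact hfg_none g hg
      · exact hfg_surj g hg u hu i
    obtain ⟨q, hq⟩ : ∃ q, fg g hg q = y := by
      rcases hy with rfl | ⟨u, hu, i, rfl⟩
      · exact hfg_none g hg
      · exact hfg_surj g hg u hu i
    have hpq : p ≠ q := by rintro rfl; exact hxy (hp.symm.trans hq)
    obtain ⟨m, ⟨hm, hsub⟩, huniq⟩ := hDg_cov g hg p q hpq
    refine ⟨List.map (fg g hg) m, ⟨(hmem _).mpr (Or.inl ⟨⟨g, hg⟩, m, hm, rfl⟩), ?_⟩, ?_⟩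
    · have := hsub.map (fg g hg)
      simpa [hp, hq] using this
    rintro l ⟨hl, hsubl⟩
    rcases (hmem l).mp hl with ⟨⟨g', hg'⟩, m', hm', rfl⟩ | ⟨⟨c, hc⟩, m', hm', rfl⟩
    · have hxl : x ∈ List.map (fg g' hg') m' := hsubl.subset (by simp)
      have hyl : y ∈ List.map (fg g' hg') m' := hsubl.subset (by simp)
      have hInx := hInG_of_mem g' hg' m' x hxl
      have hIny := hInG_of_mem g' hg' m' y hyl
      have hgg : g' = g := by
        have hex : ∃ x' : Option (V × Fin α), InG α g x' ∧ InG α g' x' ∧ x' ≠ none := by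
          rcases eq_or_ne x none with rfl | hxn
          · exact ⟨y, hy, hIny, by rintro rfl; exact hxy rfl⟩
          · exact ⟨x, hx, hInx, hxn⟩
        obtain ⟨x', h1, h2, h3⟩ := hex
        exact (hInG_eq g hg g' hg' x' h1 h2 h3).symm
      subst hgg
      obtain ⟨p', q', hp', hq', hsub'⟩ := pair_sublist_map hsubl
      have hpp : p' = p := hfg_inj g' hg (hp'.trans hp.symm)
      have hqq : q' = q := hfg_inj g' hg (hq'.trans hq.symm)
      have : m' = m := huniq m' ⟨hm', by rw [← hpp, ← hqq]; exact hsub'⟩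
      rw [this]
    · exfalso
      obtain ⟨p', q', hp', hq', hsub'⟩ := pair_sublist_map hsubl
      obtain ⟨u, hub, i, hxe⟩ := hfb_range c hc p'
      obtain ⟨v, hvb, j, hye⟩ := hfb_range c hc q'
      have hxs : x = some (u, i) := hp'.symm.trans hxe
      have hys : y = some (v, j) := hq'.symm.trans hye
      have hug := hInG_some g x u i hx hxs
      have hvg := hInG_some g y v j hy hys
      by_cases huv : u = v
      · subst huv
        have hpp : p' = q' := hsameb c hc m' hm' p' (hsub'.subset (by simp))
          q' (hsub'.subset (by simp)) u i j hxe hye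
        have hq'' : fb c hc p' = y := by rw [hpp]; exact hq'
        exact hxy (hxs.trans (hxe.symm.trans hq''))
      · exact huv (hblk_grp c hc g hg u v hub hvb hug hvg)
  -- assemble the final design
  refine existsSSDD_of_card ?_ 𝔅 ⟨?_, ?_⟩ ?_
  · simp [Fintype.card_option, Fintype.card_prod, mul_comm]
  · -- shape
    intro l hl
    rcases (hmem l).mp hl with ⟨⟨g, hg⟩, m, hm, rfl⟩ | ⟨⟨c, hc⟩, m, hm, rfl⟩
    · obtain ⟨h1, h2⟩ := hDg_shape g hg m hm
      exact ⟨by simpa using h1, h2.map (hfg_inj g hg)⟩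
    · obtain ⟨h1, h2⟩ := hDb_shape c hc m hm
      exact ⟨by simpa using h1, h2.map (hfb_inj c hc)⟩
  · -- coverage
    intro x y hxy
    match x, y with
    | none, none => exact absurd rfl hxy
    | none, some (v, j) =>
      exact H1 (grpOf v) (hgrpG v) _ _ hxy (Or.inl rfl) (Or.inr ⟨v, hgrpm v, j, rfl⟩)
    | some (u, i), none =>
      exact H1 (grpOf u) (hgrpG u) _ _ hxy (Or.inr ⟨u, hgrpm u, i, rfl⟩) (Or.inl rfl)
    | some (u, i), some (v, j) =>
      by_cases hguv : grpOf u = grpOf v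
      · exact H1 (grpOf u) (hgrpG u) _ _ hxy (Or.inr ⟨u, hgrpm u, i, rfl⟩)
          (Or.inr ⟨v, by rw [hguv]; exact hgrpm v, j, rfl⟩)
      · have huv : u ≠ v := by rintro rfl; exact hguv rfl
        have hnog : ¬ ∃ g ∈ G, u ∈ g ∧ v ∈ g := by
          rintro ⟨g, hgG, hug, hvg⟩
          exact hguv ((hgrpu u g hgG hug).symm.trans (hgrpu v g hgG hvg))
        obtain ⟨b₀, ⟨hb₀, hub₀, hvb₀⟩, hbuniq⟩ := (hpairs u v huv).2 hnog
        obtain ⟨p, hp⟩ := hfb_surj b₀ hb₀ u hub₀ i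
        obtain ⟨q, hq⟩ := hfb_surj b₀ hb₀ v hvb₀ j
        have hpq : p ≠ q := by
          rintro rfl
          rw [hp] at hq
          simp only [Option.some.injEq, Prod.mk.injEq] at hq
          exact huv hq.1
        have hnb : ¬ ∃ z i' j', fb b₀ hb₀ p = some (z, i') ∧ fb b₀ hb₀ q = some (z, j') := by
          rintro ⟨z, i', j', h1, h2⟩
          rw [hp] at h1; rw [hq] at h2
          simp only [Option.some.injEq, Prod.mk.injEq] at h1 h2
          exact huv (h1.1.trans h2.1.symm)
        obtain ⟨m, ⟨hm, hsub⟩, huniq⟩ := hDb_cov b₀ hb₀ p q hpq hnb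
        refine ⟨List.map (fb b₀ hb₀) m, ⟨(hmem _).mpr (Or.inr ⟨⟨b₀, hb₀⟩, m, hm, rfl⟩), ?_⟩, ?_⟩
        · have := hsub.map (fb b₀ hb₀)
          simpa [hp, hq] using this
        rintro l ⟨hl, hsubl⟩
        rcases (hmem l).mp hl with ⟨⟨g, hgG⟩, m', hm', rfl⟩ | ⟨⟨c, hc⟩, m', hm', rfl⟩
        · exfalso
          have hInx := hInG_of_mem g hgG m' _ (hsubl.subset (by simp : some (u, i) ∈ [some (u,i), some (v,j)]))
          have hIny := hInG_of_mem g hgG m' _ (hsubl.subset (by simp : some (v, j) ∈ [some (u,i), some (v,j)]))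
          have hug := hInG_some g _ u i hInx rfl
          have hvg := hInG_some g _ v j hIny rfl
          exact hnog ⟨g, hgG, hug, hvg⟩
        · obtain ⟨p', q', hp', hq', hsub'⟩ := pair_sublist_map hsubl
          obtain ⟨u', hu'c, i', hxe⟩ := hfb_range c hc p'
          obtain ⟨v', hv'c, j', hye⟩ := hfb_range c hc q'
          have hu' : u' = u ∧ i' = i := by
            have h := hxe.symm.trans hp'
            simpa using h
          have hv' : v' = v ∧ j' = j := by
            have h := hye.symm.trans hq'
            simpa using h
          have hcu : c = b₀ := hbuniq c ⟨hc, hu'.1 ▸ hu'c, hv'.1 ▸ hv'c⟩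
          subst hcu
          have hpp : p' = p := hfb_inj c hc (hp'.trans hp.symm)
          have hqq : q' = q := hfb_inj c hc (hq'.trans hq.symm)
          have : m' = m := huniq m' ⟨hm', by rw [← hpp, ← hqq]; exact hsub'⟩
          rw [this]
  · -- super-simplicity
    intro l hl l' hl' hne
    rcases (hmem l).mp hl with ⟨⟨g, hg⟩, m, hm, rfl⟩ | ⟨⟨c, hc⟩, m, hm, rfl⟩ <;>
      rcases (hmem l').mp hl' with ⟨⟨g', hg'⟩, m', hm', rfl⟩ | ⟨⟨c', hc'⟩, m', hm', rfl⟩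
    · -- group / group
      by_cases hgg : g = g'
      · subst hgg
        exact ss_image (hfg_inj g hg) (hDg_ss g hg) hm (by exact hm') (by exact hne)
      · refine le_trans (Finset.card_le_one.mpr ?_) one_le_two
        intro x hx x' hx'
        rw [Finset.mem_inter, List.mem_toFinset, List.mem_toFinset] at hx hx'
        have h1 := hInG_of_mem g hg m x hx.1
        have h2 := hInG_of_mem g' hg' m' x hx.2
        have h1' := hInG_of_mem g hg m x' hx'.1
        have h2' := hInG_of_mem g' hg' m' x' hx'.2
        have hxn : x = none := by
          by_contra hn
          exact hgg (hInG_eq g hg g' hg' x h1 h2 hn)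
        have hxn' : x' = none := by
          by_contra hn
          exact hgg (hInG_eq g hg g' hg' x' h1' h2' hn)
        rw [hxn, hxn']
    · -- group / block
      refine le_trans (Finset.card_le_one.mpr ?_) one_le_two
      intro x hx x' hx'
      rw [Finset.mem_inter, List.mem_toFinset, List.mem_toFinset] at hx hx'
      obtain ⟨z, hz, k, rfl⟩ := hInB_of_mem c' hc' m' x hx.2
      obtain ⟨z', hz', k', rfl⟩ := hInB_of_mem c' hc' m' x' hx'.2
      have hzg := hInG_some g _ z k (hInG_of_mem g hg m _ hx.1) rfl
      have hz'g := hInG_some g _ z' k' (hInG_of_mem g hg m _ hx'.1) rfl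
      have hzz : z = z' := hblk_grp c' hc' g hg z z' hz hz' hzg hz'g
      subst hzz
      obtain ⟨p, hpm, hp⟩ := List.mem_map.mp hx.2
      obtain ⟨p', hp'm, hp'⟩ := List.mem_map.mp hx'.2
      have hpp := hsameb c' hc' m' hm' p hpm p' hp'm z k k' hp hp'
      rw [← hp, ← hp', hpp]
    · -- block / group
      refine le_trans (Finset.card_le_one.mpr ?_) one_le_two
      intro x hx x' hx'
      rw [Finset.mem_inter, List.mem_toFinset, List.mem_toFinset] at hx hx'
      obtain ⟨z, hz, k, rfl⟩ := hInB_of_mem c hc m x hx.1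
      obtain ⟨z', hz', k', rfl⟩ := hInB_of_mem c hc m x' hx'.1
      have hzg := hInG_some g' _ z k (hInG_of_mem g' hg' m' _ hx.2) rfl
      have hz'g := hInG_some g' _ z' k' (hInG_of_mem g' hg' m' _ hx'.2) rfl
      have hzz : z = z' := hblk_grp c hc g' hg' z z' hz hz' hzg hz'g
      subst hzz
      obtain ⟨p, hpm, hp⟩ := List.mem_map.mp hx.1
      obtain ⟨p', hp'm, hp'⟩ := List.mem_map.mp hx'.1
      have hpp := hsameb c hc m hm p hpm p' hp'm z k k' hp hp'
      rw [← hp, ← hp', hpp]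
    · -- block / block
      by_cases hcc : c = c'
      · subst hcc
        exact ss_image (hfb_inj c hc) (hDb_ss c hc) hm (by exact hm') (by exact hne)
      · refine le_trans (Finset.card_le_one.mpr ?_) one_le_two
        intro x hx x' hx'
        rw [Finset.mem_inter, List.mem_toFinset, List.mem_toFinset] at hx hx'
        obtain ⟨z1, hz1, k1, rfl⟩ := hInB_of_mem c hc m x hx.1
        obtain ⟨z2, hz2, k2, he⟩ := hInB_of_mem c' hc' m' _ hx.2
        obtain ⟨z3, hz3, k3, rfl⟩ := hInB_of_mem c hc m x' hx'.1
        obtain ⟨z4, hz4, k4, he'⟩ := hInB_of_mem c' hc' m' _ hx'.2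
        simp only [Option.some.injEq, Prod.mk.injEq] at he he'
        have h13 : z1 = z3 := hblk_blk c hc c' hc' hcc z1 z3 hz1
          (by rw [he.1]; exact hz2) hz3 (by rw [he'.1]; exact hz4)
        obtain ⟨p, hpm, hp⟩ := List.mem_map.mp hx.1
        obtain ⟨p', hp'm, hp'⟩ := List.mem_map.mp hx'.1
        have hpp := hsameb c hc m hm p hpm p' hp'm z1 k1 k3 hp (by rw [← h13] at hp'; exact hp')
        rw [← hp, ← hp', hpp]
end

section
/- If there exists a resolvable 2-(20n+5, 5, 1) balanced incomplete block design (which has 5n+1 parallel classes), then for every x with 0 ≤ x ≤ 5n there exists a {5,6}-GDD of type 5^{4n+1} x^1. -/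
/-- `B` is a 2-(v,k,1) balanced incomplete block design on `V`. -/
def IsBIBD (V : Type*) [DecidableEq V] (B : Finset (Finset V)) (k : ℕ) : Prop :=
  (∀ b ∈ B, b.card = k) ∧ ∀ x y : V, x ≠ y → ∃! b, b ∈ B ∧ x ∈ b ∧ y ∈ b

/-- `B` is resolvable: its blocks partition into parallel classes, each of which
partitions the point set. -/
def IsResolvable (V : Type*) [DecidableEq V] (B : Finset (Finset V)) : Prop :=
  ∃ P : Finset (Finset (Finset V)),
    (∀ p ∈ P, p ⊆ B ∧ ∀ x : V, ∃! b, b ∈ p ∧ x ∈ b) ∧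
    ∀ b ∈ B, ∃! p, p ∈ P ∧ b ∈ p

/-- If a resolvable 2-(20n+5,5,1)-BIBD exists, then for every x ≤ 5n there exists a
{5,6}-GDD of type 5^{4n+1} x^1. -/
theorem GDD_from_RBIBD (n x : ℕ) (hx : x ≤ 5 * n)
    (h : ∃ B : Finset (Finset (Fin (20 * n + 5))),
      IsBIBD (Fin (20 * n + 5)) B 5 ∧ IsResolvable (Fin (20 * n + 5)) B) :
    ∃ G Bl : Finset (Finset (Fin (20 * n + 5 + x))),
      IsGDD (Fin (20 * n + 5 + x)) G Bl {5, 6} ∧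
      G.val.map Finset.card = Multiset.replicate (4 * n + 1) 5 + {x} := by
  classical
  obtain ⟨B, ⟨hBcard, hBpair⟩, P, hPclass, hPuniq⟩ := h
  -- the embedding of old points
  set e : Fin (20 * n + 5) → Fin (20 * n + 5 + x) :=
    fun v => ⟨v.val, by have := v.isLt; omega⟩ with he_def
  have he : Function.Injective e := by
    intro a b hab
    have h2 := congrArg Fin.val hab
    exact Fin.ext h2
  have he_lt : ∀ v, (e v).val < 20 * n + 5 := fun v => v.isLt
  -- the set of new points
  set N : Finset (Fin (20 * n + 5 + x)) :=
    Finset.univ.filter (fun w => 20 * n + 5 ≤ w.val) with hN_def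
  have hmemN : ∀ w, w ∈ N ↔ 20 * n + 5 ≤ w.val := by
    intro w; simp [hN_def]
  have hNcard : N.card = x := by
    have himg : N = Finset.image
        (fun i : Fin x => (⟨20 * n + 5 + i.val, by have := i.isLt; omega⟩ :
          Fin (20 * n + 5 + x))) Finset.univ := by
      ext w
      simp only [hmemN, Finset.mem_image, Finset.mem_univ, true_and]
      constructor
      · intro hw
        refine ⟨⟨w.val - (20 * n + 5), by have := w.isLt; omega⟩, ?_⟩
        apply Fin.ext; simp; omega
      · rintro ⟨i, rfl⟩; simp
    rw [himg, Finset.card_image_of_injective _ ?_, Finset.card_univ, Fintype.card_fin]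
    intro a b hab
    have : 20 * n + 5 + a.val = 20 * n + 5 + b.val := congrArg Fin.val hab
    exact Fin.ext (by omega)
  -- counting: P has at least 5n+1 parallel classes
  have hPcard : 5 * n + 1 ≤ P.card := by
    set v0 : Fin (20 * n + 5) := ⟨0, by omega⟩ with hv0
    set Bv : Finset (Finset (Fin (20 * n + 5))) := B.filter (fun b => v0 ∈ b) with hBv
    have hBvmem : ∀ b, b ∈ Bv ↔ b ∈ B ∧ v0 ∈ b := by intro b; simp [hBv]
    have hbiU : Bv.biUnion (fun b => b.erase v0) = Finset.univ.erase v0 := by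
      ext y
      simp only [Finset.mem_biUnion, Finset.mem_erase, Finset.mem_univ, and_true]
      constructor
      · rintro ⟨b, hb, hy, -⟩; exact hy
      · intro hy
        obtain ⟨b, ⟨hbB, hyb, hvb⟩, -⟩ := hBpair y v0 hy
        exact ⟨b, (hBvmem b).2 ⟨hbB, hvb⟩, hy, hyb⟩
    have hdisj : ∀ b ∈ Bv, ∀ c ∈ Bv, b ≠ c →
        Disjoint (b.erase v0) (c.erase v0) := by
      intro b hb c hc hbc
      rw [Finset.disjoint_left]
      intro y hyb hyc
      obtain ⟨hbB, hvb⟩ := (hBvmem b).1 hb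
      obtain ⟨hcB, hvc⟩ := (hBvmem c).1 hc
      obtain ⟨hyne, hyb'⟩ := Finset.mem_erase.1 hyb
      obtain ⟨-, hyc'⟩ := Finset.mem_erase.1 hyc
      obtain ⟨bw, -, huniq⟩ := hBpair y v0 hyne
      exact hbc ((huniq b ⟨hbB, hyb', hvb⟩).trans (huniq c ⟨hcB, hyc', hvc⟩).symm)
    have hsum : (Bv.biUnion (fun b => b.erase v0)).card = 4 * Bv.card := by
      rw [Finset.card_biUnion hdisj]
      rw [Finset.sum_congr rfl (fun b hb => ?_), Finset.sum_const, smul_eq_mul,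
        mul_comm]
      obtain ⟨hbB, hvb⟩ := (hBvmem b).1 hb
      rw [Finset.card_erase_of_mem hvb, hBcard b hbB]
    have hcardU : (Finset.univ.erase v0).card = 20 * n + 4 := by
      rw [Finset.card_erase_of_mem (Finset.mem_univ _), Finset.card_univ,
        Fintype.card_fin]
      omega
    have hBvcard : Bv.card = 5 * n + 1 := by
      have := hsum; rw [hbiU, hcardU] at this; omega
    -- injection from Bv into P
    have hinj : Bv.card ≤ P.card := by
      apply Finset.card_le_card_of_injOn
        (fun b => if h : ∃! p, p ∈ P ∧ b ∈ p then h.choose else ∅)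
      · intro b hb
        have hb' := hPuniq b ((hBvmem b).1 hb).1
        simp only [dif_pos hb']
        exact hb'.choose_spec.1.1
      · intro b hb c hc hfe
        simp only [Finset.mem_coe] at hb hc
        have hbu := hPuniq b ((hBvmem b).1 hb).1
        have hcu := hPuniq c ((hBvmem c).1 hc).1
        simp only [dif_pos hbu, dif_pos hcu] at hfe
        have hbp := hbu.choose_spec.1
        have hcp := hcu.choose_spec.1
        rw [hfe] at hbp
        obtain ⟨bw, -, huniq⟩ := (hPclass _ hcp.1).2 v0
        exact (huniq b ⟨hbp.2, ((hBvmem b).1 hb).2⟩).trans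
          (huniq c ⟨hcp.2, ((hBvmem c).1 hc).2⟩).symm
    omega
  -- choose the groups class p0
  obtain ⟨p0, hp0P⟩ : P.Nonempty := Finset.card_pos.1 (by omega)
  have hp0B : p0 ⊆ B := (hPclass p0 hp0P).1
  have hp0part : ∀ v, ∃! b, b ∈ p0 ∧ v ∈ b := (hPclass p0 hp0P).2
  -- choose x further classes
  obtain ⟨S, hSsub, hScard⟩ : ∃ S ⊆ P.erase p0, S.card = x := by
    apply Finset.exists_subset_card_eq
    rw [Finset.card_erase_of_mem hp0P]; omega
  have hSP : ∀ p ∈ S, p ∈ P ∧ p ≠ p0 := by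
    intro p hp
    have := hSsub hp
    rw [Finset.mem_erase] at this
    exact ⟨this.2, this.1⟩
  -- bijection between S and the new points
  let φ := Finset.equivOfCardEq (hScard.trans hNcard.symm)
  set np : Finset (Finset (Fin (20 * n + 5))) → Fin (20 * n + 5 + x) :=
    fun p => if h : p ∈ S then (φ ⟨p, h⟩ : Fin (20 * n + 5 + x)) else ⟨0, by omega⟩
    with hnp_def
  have hnpN : ∀ p ∈ S, np p ∈ N := by
    intro p hp; simp only [hnp_def, dif_pos hp]; exact (φ ⟨p, hp⟩).2
  have hnpinj : ∀ p ∈ S, ∀ q ∈ S, np p = np q → p = q := by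
    intro p hp q hq hpq
    simp only [hnp_def, dif_pos hp, dif_pos hq] at hpq
    have := φ.injective (Subtype.ext hpq)
    exact congrArg Subtype.val this
  have hnpsurj : ∀ m ∈ N, ∃ p ∈ S, np p = m := by
    intro m hm
    refine ⟨(φ.symm ⟨m, hm⟩).val, (φ.symm ⟨m, hm⟩).2, ?_⟩
    simp only [hnp_def, dif_pos (φ.symm ⟨m, hm⟩).2]
    have : (⟨(φ.symm ⟨m, hm⟩).val, (φ.symm ⟨m, hm⟩).2⟩ :
        {p // p ∈ S}) = φ.symm ⟨m, hm⟩ := rfl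
    rw [this, φ.apply_symm_apply]
  -- each block lies in at most one class of S
  have hclassuniq : ∀ b ∈ B, ∀ p ∈ P, ∀ q ∈ P, b ∈ p → b ∈ q → p = q := by
    intro b hb p hp q hq hbp hbq
    obtain ⟨pw, -, huniq⟩ := hPuniq b hb
    exact (huniq p ⟨hp, hbp⟩).trans (huniq q ⟨hq, hbq⟩).symm
  -- blocks of the GDD
  set extb : Finset (Fin (20 * n + 5)) → Finset (Fin (20 * n + 5 + x)) :=
    fun b => (S.filter (fun p => b ∈ p)).image np with hextb_def
  set F : Finset (Fin (20 * n + 5)) → Finset (Fin (20 * n + 5 + x)) :=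
    fun b => b.image e ∪ extb b with hF_def
  set Bl : Finset (Finset (Fin (20 * n + 5 + x))) := (B \ p0).image F with hBl_def
  have hextbN : ∀ b w, w ∈ extb b → 20 * n + 5 ≤ w.val := by
    intro b w hw
    simp only [hextb_def, Finset.mem_image, Finset.mem_filter] at hw
    obtain ⟨p, ⟨hpS, -⟩, rfl⟩ := hw
    exact (hmemN _).1 (hnpN p hpS)
  have hextbcard : ∀ b ∈ B, (extb b).card ≤ 1 := by
    intro b hb
    apply le_trans Finset.card_image_le
    rw [Finset.card_le_one]
    intro p hp q hq
    rw [Finset.mem_filter] at hp hq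
    exact hclassuniq b hb p (hSP p hp.1).1 q (hSP q hq.1).1 hp.2 hq.2
  have hmem_eF : ∀ b (v : Fin (20 * n + 5)), e v ∈ F b ↔ v ∈ b := by
    intro b v
    simp only [hF_def, Finset.mem_union]
    constructor
    · rintro (hv | hv)
      · obtain ⟨u, hu, heu⟩ := Finset.mem_image.1 hv
        rwa [he heu] at hu
      · exact absurd (hextbN b _ hv) (by have := he_lt v; omega)
    · intro hv; exact Or.inl (Finset.mem_image_of_mem e hv)
  have hmemNF : ∀ b, ∀ m ∈ N, (m ∈ F b ↔ ∃ p ∈ S, b ∈ p ∧ np p = m) := by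
    intro b m hm
    simp only [hF_def, Finset.mem_union]
    constructor
    · rintro (hv | hv)
      · obtain ⟨u, -, heu⟩ := Finset.mem_image.1 hv
        have := (hmemN m).1 hm
        have := he_lt u
        rw [heu] at *
        omega
      · simp only [hextb_def, Finset.mem_image, Finset.mem_filter] at hv
        obtain ⟨p, ⟨hpS, hbp⟩, rfl⟩ := hv
        exact ⟨p, hpS, hbp, rfl⟩
    · rintro ⟨p, hpS, hbp, rfl⟩
      exact Or.inr (by
        simp only [hextb_def, Finset.mem_image, Finset.mem_filter]
        exact ⟨p, ⟨hpS, hbp⟩, rfl⟩)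
  -- groups
  set A : Finset (Finset (Fin (20 * n + 5 + x))) :=
    p0.image (fun b => b.image e) with hA_def
  set G : Finset (Finset (Fin (20 * n + 5 + x))) := insert N A with hG_def
  have hNnotA : N ∉ A := by
    intro hNA
    obtain ⟨b, hb, hbe⟩ := Finset.mem_image.1 hNA
    have hb5 : b.card = 5 := hBcard b (hp0B hb)
    have : b.Nonempty := Finset.card_pos.1 (by omega)
    obtain ⟨u, hu⟩ := this
    have : e u ∈ N := hbe ▸ Finset.mem_image_of_mem e hu
    exact absurd ((hmemN _).1 this) (by have := he_lt u; omega)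
  -- every old point representation
  have hold : ∀ w : Fin (20 * n + 5 + x), w ∉ N → ∃ v, e v = w := by
    intro w hw
    rw [hmemN] at hw
    exact ⟨⟨w.val, by omega⟩, Fin.ext rfl⟩
  have hGpart : ∀ w : Fin (20 * n + 5 + x), ∃! g, g ∈ G ∧ w ∈ g := by
    intro w
    by_cases hw : w ∈ N
    · refine ⟨N, ⟨Finset.mem_insert_self _ _, hw⟩, ?_⟩
      rintro g ⟨hgG, hwg⟩
      rcases Finset.mem_insert.1 hgG with rfl | hgA
      · rfl
      · exfalso
        obtain ⟨b, hb, rfl⟩ := Finset.mem_image.1 hgA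
        obtain ⟨u, -, heu⟩ := Finset.mem_image.1 hwg
        have := (hmemN w).1 hw
        have := he_lt u
        rw [heu] at *
        omega
    · obtain ⟨v, rfl⟩ := hold w hw
      obtain ⟨b, ⟨hbp0, hvb⟩, huniq⟩ := hp0part v
      refine ⟨b.image e, ⟨Finset.mem_insert_of_mem (Finset.mem_image_of_mem _ hbp0),
        Finset.mem_image_of_mem e hvb⟩, ?_⟩
      rintro g ⟨hgG, hwg⟩
      rcases Finset.mem_insert.1 hgG with rfl | hgA
      · exact absurd hwg hw
      · obtain ⟨c, hc, rfl⟩ := Finset.mem_image.1 hgA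
        obtain ⟨u, hu, heu⟩ := Finset.mem_image.1 hwg
        rw [he heu] at hu
        rw [huniq c ⟨hc, hu⟩]
  -- same-group characterisation for old points
  have hsgold : ∀ u v : Fin (20 * n + 5),
      (∃ g ∈ G, e u ∈ g ∧ e v ∈ g) ↔ ∃ b ∈ p0, u ∈ b ∧ v ∈ b := by
    intro u v
    constructor
    · rintro ⟨g, hgG, hug, hvg⟩
      rcases Finset.mem_insert.1 hgG with rfl | hgA
      · exact absurd ((hmemN _).1 hug) (by have := he_lt u; omega)
      · obtain ⟨b, hb, rfl⟩ := Finset.mem_image.1 hgA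
        obtain ⟨u', hu', heu⟩ := Finset.mem_image.1 hug
        obtain ⟨v', hv', hev⟩ := Finset.mem_image.1 hvg
        rw [he heu] at hu'; rw [he hev] at hv'
        exact ⟨b, hb, hu', hv'⟩
    · rintro ⟨b, hb, hub, hvb⟩
      exact ⟨b.image e, Finset.mem_insert_of_mem (Finset.mem_image_of_mem _ hb),
        Finset.mem_image_of_mem e hub, Finset.mem_image_of_mem e hvb⟩
  -- membership in Bl
  have hBlmem : ∀ bl, bl ∈ Bl ↔ ∃ b, b ∈ B ∧ b ∉ p0 ∧ F b = bl := by
    intro bl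
    simp only [hBl_def, Finset.mem_image, Finset.mem_sdiff]
    constructor
    · rintro ⟨b, ⟨hb, hbp⟩, rfl⟩; exact ⟨b, hb, hbp, rfl⟩
    · rintro ⟨b, hb, hbp, rfl⟩; exact ⟨b, ⟨hb, hbp⟩, rfl⟩
  -- the pair conditions
  set Cond : Fin (20 * n + 5 + x) → Fin (20 * n + 5 + x) → Prop :=
    fun w1 w2 =>
      ((∃ g ∈ G, w1 ∈ g ∧ w2 ∈ g) → ¬ ∃ b ∈ Bl, w1 ∈ b ∧ w2 ∈ b) ∧
      ((¬ ∃ g ∈ G, w1 ∈ g ∧ w2 ∈ g) → ∃! b, b ∈ Bl ∧ w1 ∈ b ∧ w2 ∈ b)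
    with hCond_def
  have hsymm : ∀ w1 w2, Cond w1 w2 → Cond w2 w1 := by
    intro w1 w2 ⟨h1, h2⟩
    constructor
    · rintro ⟨g, hg, hw2, hw1⟩ ⟨b, hb, hw2b, hw1b⟩
      exact h1 ⟨g, hg, hw1, hw2⟩ ⟨b, hb, hw1b, hw2b⟩
    · intro hns
      have : ¬ ∃ g ∈ G, w1 ∈ g ∧ w2 ∈ g := by
        rintro ⟨g, hg, h1', h2'⟩; exact hns ⟨g, hg, h2', h1'⟩
      obtain ⟨b, ⟨hbBl, hw1b, hw2b⟩, huniq⟩ := h2 this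
      exact ⟨b, ⟨hbBl, hw2b, hw1b⟩, fun c ⟨hc, h2c, h1c⟩ => huniq c ⟨hc, h1c, h2c⟩⟩
  -- old-old pairs
  have hOO : ∀ u v : Fin (20 * n + 5), u ≠ v → Cond (e u) (e v) := by
    intro u v huv
    constructor
    · intro hsg ⟨bl, hbl, hubl, hvbl⟩
      obtain ⟨b0, hb0, hub0, hvb0⟩ := (hsgold u v).1 hsg
      obtain ⟨c, hcB, hcp0, rfl⟩ := (hBlmem bl).1 hbl
      rw [hmem_eF] at hubl hvbl
      obtain ⟨bw, -, huniq⟩ := hBpair u v huv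
      exact hcp0 ((huniq c ⟨hcB, hubl, hvbl⟩).trans
        (huniq b0 ⟨hp0B hb0, hub0, hvb0⟩).symm ▸ hb0)
    · intro hns
      have hnp0 : ¬ ∃ b ∈ p0, u ∈ b ∧ v ∈ b := fun hb => hns ((hsgold u v).2 hb)
      obtain ⟨b, ⟨hbB, hub, hvb⟩, huniq⟩ := hBpair u v huv
      have hbp0 : b ∉ p0 := fun hb => hnp0 ⟨b, hb, hub, hvb⟩
      refine ⟨F b, ⟨(hBlmem _).2 ⟨b, hbB, hbp0, rfl⟩,
        (hmem_eF b u).2 hub, (hmem_eF b v).2 hvb⟩, ?_⟩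
      rintro bl ⟨hbl, hubl, hvbl⟩
      obtain ⟨c, hcB, hcp0, rfl⟩ := (hBlmem bl).1 hbl
      rw [hmem_eF] at hubl hvbl
      rw [huniq c ⟨hcB, hubl, hvbl⟩]
  -- old-new pairs
  have hON : ∀ (u : Fin (20 * n + 5)), ∀ m ∈ N, Cond (e u) m := by
    intro u m hm
    have hnsg : ¬ ∃ g ∈ G, e u ∈ g ∧ m ∈ g := by
      rintro ⟨g, hgG, hug, hmg⟩
      rcases Finset.mem_insert.1 hgG with rfl | hgA
      · exact absurd ((hmemN _).1 hug) (by have := he_lt u; omega)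
      · obtain ⟨b, hb, rfl⟩ := Finset.mem_image.1 hgA
        obtain ⟨u', -, heu⟩ := Finset.mem_image.1 hmg
        have := (hmemN m).1 hm
        have := he_lt u'
        rw [heu] at *
        omega
    constructor
    · intro hsg; exact absurd hsg hnsg
    · intro _
      obtain ⟨p, hpS, rfl⟩ := hnpsurj m hm
      obtain ⟨hpP, hpne⟩ := hSP p hpS
      obtain ⟨b, ⟨hbp, hub⟩, huniqb⟩ := (hPclass p hpP).2 u
      have hbB : b ∈ B := (hPclass p hpP).1 hbp
      have hbp0 : b ∉ p0 := by
        intro hb0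
        exact hpne (hclassuniq b hbB p hpP p0 hp0P hbp hb0)
      refine ⟨F b, ⟨(hBlmem _).2 ⟨b, hbB, hbp0, rfl⟩,
        (hmem_eF b u).2 hub, (hmemNF b _ hm).2 ⟨p, hpS, hbp, rfl⟩⟩, ?_⟩
      rintro bl ⟨hbl, hubl, hmbl⟩
      obtain ⟨c, hcB, hcp0, rfl⟩ := (hBlmem bl).1 hbl
      rw [hmem_eF] at hubl
      obtain ⟨q, hqS, hcq, hqm⟩ := (hmemNF c _ hm).1 hmbl
      have hqp : q = p := hnpinj q hqS p hpS hqm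
      rw [hqp] at hcq
      rw [huniqb c ⟨hcq, hubl⟩]
  -- new-new pairs
  have hNN : ∀ m ∈ N, ∀ m' ∈ N, m ≠ m' → Cond m m' := by
    intro m hm m' hm' hne
    constructor
    · intro _ ⟨bl, hbl, hmbl, hm'bl⟩
      obtain ⟨c, hcB, hcp0, rfl⟩ := (hBlmem bl).1 hbl
      obtain ⟨p, hpS, hcp, hpm⟩ := (hmemNF c _ hm).1 hmbl
      obtain ⟨q, hqS, hcq, hqm⟩ := (hmemNF c _ hm').1 hm'bl
      have : p = q := hclassuniq c hcB p (hSP p hpS).1 q (hSP q hqS).1 hcp hcq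
      exact hne (hpm ▸ hqm ▸ this ▸ rfl)
    · intro hns
      exact absurd ⟨N, Finset.mem_insert_self _ _, hm, hm'⟩ hns
  -- block sizes
  have hblcard : ∀ bl ∈ Bl, bl.card ∈ ({5, 6} : Set ℕ) := by
    intro bl hbl
    obtain ⟨b, hbB, -, rfl⟩ := (hBlmem bl).1 hbl
    have hdisj : Disjoint (b.image e) (extb b) := by
      rw [Finset.disjoint_left]
      intro w hw hw'
      obtain ⟨u, -, heu⟩ := Finset.mem_image.1 hw
      have := hextbN b w hw'
      have := he_lt u
      rw [heu] at *
      omega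
    have : (F b).card = (b.image e).card + (extb b).card := by
      rw [hF_def]; exact Finset.card_union_of_disjoint hdisj
    rw [Finset.card_image_of_injective _ he, hBcard b hbB] at this
    have h1 := hextbcard b hbB
    simp only [Set.mem_insert_iff, Set.mem_singleton_iff]
    omega
  -- p0 has 4n+1 blocks
  have hp0card : p0.card = 4 * n + 1 := by
    have hbiU : p0.biUnion id = Finset.univ := by
      ext y
      simp only [Finset.mem_biUnion, id, Finset.mem_univ, iff_true]
      obtain ⟨b, hb, -⟩ := hp0part y
      exact ⟨b, hb.1, hb.2⟩
    have hdisj : ∀ b ∈ p0, ∀ c ∈ p0, b ≠ c → Disjoint (id b) (id c) := by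
      intro b hb c hc hbc
      rw [Finset.disjoint_left]
      intro y hyb hyc
      obtain ⟨bw, -, huniq⟩ := hp0part y
      exact hbc ((huniq b ⟨hb, hyb⟩).trans (huniq c ⟨hc, hyc⟩).symm)
    have := Finset.card_biUnion hdisj
    rw [hbiU, Finset.card_univ, Fintype.card_fin] at this
    simp only [id] at this
    rw [Finset.sum_congr rfl (fun b hb => hBcard b (hp0B hb)),
      Finset.sum_const, smul_eq_mul] at this
    omega
  -- assemble
  refine ⟨G, Bl, ⟨hGpart, hblcard, ?_⟩, ?_⟩
  · intro w1 w2 hne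
    by_cases h1 : w1 ∈ N
    · by_cases h2 : w2 ∈ N
      · exact hNN w1 h1 w2 h2 hne
      · obtain ⟨v, rfl⟩ := hold w2 h2
        exact hsymm _ _ (hON v w1 h1)
    · obtain ⟨u, rfl⟩ := hold w1 h1
      by_cases h2 : w2 ∈ N
      · exact hON u w2 h2
      · obtain ⟨v, rfl⟩ := hold w2 h2
        exact hOO u v (fun h => hne (h ▸ rfl))
  · have hAval : A.val.map Finset.card = Multiset.replicate (4 * n + 1) 5 := by
      rw [Multiset.eq_replicate]
      constructor
      · rw [Multiset.card_map]
        have : A.card = p0.card := by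
          rw [hA_def]
          apply Finset.card_image_of_injective
          exact Finset.image_injective he
        rw [← Finset.card_def]  -- maybe adjust
        rw [this, hp0card]
      · intro c hc
        obtain ⟨a, ha, rfl⟩ := Multiset.mem_map.1 hc
        rw [Finset.mem_val] at ha
        obtain ⟨b, hb, rfl⟩ := Finset.mem_image.1 ha
        rw [Finset.card_image_of_injective _ he]
        exact hBcard b (hp0B hb)
    rw [hG_def, Finset.insert_val_of_notMem hNnotA, Multiset.map_cons, hAval,
      hNcard, ← Multiset.singleton_add]
    exact add_comm _ _
end
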